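/- arXiv:1706.04331 — 2 statements merged into one kernel-verified Lean document; each statement's English description precedes it below -/
import Mathlib

section
/- Let $F\in\mathbb{Z}[x,y]$ be an irreducible binary form of degree $d$ with $b=F(1,0)\neq 0$, let $\theta$ be a root of $\tilde F(x,1)$ where $\tilde F(x,y)=b^{d-1}F(b^{-1}x,y)$, $K=\mathbb{Q}(\theta)$, and $\Delta_\theta$ the discriminant of the order $\mathbb{Z}[\theta]$. Let $(s,t)\in\mathbb{Z}^2$ with $\gcd(s,t)=1$ and $F(s,t)\neq 0$. Then every integral ideal $\mathfrak{a}$ of $\mathfrak{o}_K$ dividing $(bs-\theta t)$ with $\gcd(\mathrm{N}_K\mathfrak{a},2b\Delta_\theta)=1$ is divisible only by prime ideals of residue degree 1, and no two distinct prime ideals of equal norm divide $\mathfrak{a}$. -/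
set_option synthInstance.maxHeartbeats 1000000
set_option maxHeartbeats 1000000

open NumberField MvPolynomial

private lemma aux_aeval_sub_mem {S : Type*} [CommRing S] (𝔭 : Ideal S) (θ : S) (c : ℤ)
    (hθc : θ - (c : S) ∈ 𝔭) (g : Polynomial ℤ) :
    Polynomial.aeval θ g - ((Polynomial.eval c g : ℤ) : S) ∈ 𝔭 := by
  have hdvd1 : θ - (c : S) ∣ Polynomial.aeval θ g - ((Polynomial.eval c g : ℤ) : S) := by
    have h1 : Polynomial.aeval θ g = (g.map (Int.castRingHom S)).eval θ := by
      rw [Polynomial.aeval_def, Polynomial.eval_map]; rfl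
    have h2 : ((Polynomial.eval c g : ℤ) : S) = (g.map (Int.castRingHom S)).eval (c : S) := by
      rw [Polynomial.eval_map, Polynomial.eval₂_at_intCast]; rfl
    rw [h1, h2]
    exact Polynomial.sub_dvd_eval_sub θ (c : S) _
  obtain ⟨z, hz⟩ := hdvd1
  rw [hz]
  exact Ideal.mul_mem_right z 𝔭 hθc

/-- The discriminant multiplies every algebraic integer into `ℤ[θ]`. -/
private lemma aux_discr_mul_mem {K : Type*} [Field K] [NumberField K] (θ : 𝓞 K) (d : ℕ)
    (hdeg : Module.finrank ℚ K = d)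
    (hgen : Algebra.adjoin ℚ {(θ : K)} = ⊤)
    (Δ : ℤ) (hΔ : Δ = Algebra.discr ℤ (fun i : Fin d => θ ^ (i : ℕ)))
    (x : 𝓞 K) : ∃ g : Polynomial ℤ, (Δ : 𝓞 K) * x = Polynomial.aeval θ g := by
  classical
  have hθZ : IsIntegral ℤ (θ : K) := RingOfIntegers.isIntegral_coe θ
  have hθQ : IsIntegral ℚ (θ : K) := IsIntegral.of_finite ℚ _
  let e : Algebra.adjoin ℚ {(θ:K)} ≃ₐ[ℚ] K :=
    (Subalgebra.equivOfEq _ _ hgen).trans Subalgebra.topEquiv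
  let B : PowerBasis ℚ K := (Algebra.adjoin.powerBasis hθQ).map e
  have hgenB : B.gen = (θ : K) := rfl
  have hdim : B.dim = d := by rw [← B.finrank, hdeg]
  have h1 : Algebra.discr ℚ B.basis • (x : K) ∈ Algebra.adjoin ℤ ({B.gen} : Set K) :=
    Algebra.discr_mul_isIntegral_mem_adjoin ℚ (hgenB ▸ hθZ) (RingOfIntegers.isIntegral_coe x)
  have hQ : Algebra.discr ℚ (fun i : Fin d => (θ : K) ^ (i : ℕ)) = algebraMap ℤ ℚ Δ := by
    rw [hΔ, Algebra.discr_def, Algebra.discr_def, RingHom.map_det]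
    congr 1
    ext i j
    simp only [Algebra.traceMatrix_apply, Algebra.traceForm_apply, RingHom.mapMatrix_apply,
      Matrix.map_apply]
    rw [← Algebra.trace_localization (Rₘ := ℚ) (Sₘ := K) ℤ (nonZeroDivisors ℤ)
      (θ ^ (i:ℕ) * θ ^ (j:ℕ))]
    simp [map_mul, map_pow]
  have hbb : Algebra.discr ℚ (⇑B.basis) = algebraMap ℤ ℚ Δ := by
    have hcomp : (⇑B.basis) = (fun i : Fin d => (θ : K) ^ (i : ℕ)) ∘ (finCongr hdim) := by
      funext i
      simp [B.basis_eq_pow, hgenB]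
    rw [hcomp, ← hQ, Algebra.discr_def, Algebra.discr_def]
    have h2 : Algebra.traceMatrix ℚ ((fun i : Fin d => (θ : K) ^ (i : ℕ)) ∘ (finCongr hdim)) =
        (Algebra.traceMatrix ℚ (fun i : Fin d => (θ : K) ^ (i : ℕ))).submatrix
          (finCongr hdim) (finCongr hdim) := by
      ext i j; rfl
    rw [h2, Matrix.det_submatrix_equiv_self]
  rw [hgenB, hbb] at h1
  rw [Algebra.adjoin_singleton_eq_range_aeval] at h1
  obtain ⟨g, hg⟩ := h1
  refine ⟨g, ?_⟩
  have hg' : Polynomial.aeval (θ : K) g = ((Δ : 𝓞 K) : K) * (x : K) := by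
    rw [show (Polynomial.aeval (θ:K)) g = (Polynomial.aeval (θ:K)).toRingHom g from rfl, hg,
      Algebra.smul_def, ← IsScalarTower.algebraMap_apply ℤ ℚ K]
    norm_cast
  apply RingOfIntegers.coe_injective (K := K)
  rw [map_mul, ← Polynomial.aeval_algebraMap_apply K θ g]
  rw [show algebraMap (𝓞 K) K θ = (θ : K) from rfl, hg']

private theorem key_lemma {K : Type*} [Field K] [NumberField K]
    (θ : 𝓞 K) (b Δ s t : ℤ) (hst : IsCoprime s t)
    (hD : ∀ x : 𝓞 K, ∃ g : Polynomial ℤ, (Δ : 𝓞 K) * x = Polynomial.aeval θ g)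
    (𝔞 : Ideal (𝓞 K))
    (hdvd : 𝔞 ∣ Ideal.span {(b : 𝓞 K) * (s : 𝓞 K) - θ * (t : 𝓞 K)})
    (hcop : IsCoprime (Ideal.absNorm 𝔞 : ℤ) (2 * b * Δ))
    (𝔭 : Ideal (𝓞 K)) (hP : Prime 𝔭) (hPa : 𝔭 ∣ 𝔞) :
    ∃ q : ℕ, q.Prime ∧ Ideal.absNorm 𝔭 = q ∧
      (∀ n : ℤ, (n : 𝓞 K) ∈ 𝔭 ↔ (q : ℤ) ∣ n) ∧
      (θ - ((Int.gcdA t (q : ℤ) * (b * s) : ℤ) : 𝓞 K) ∈ 𝔭) ∧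
      ¬ ((q : ℤ) ∣ Δ) := by
  classical
  have hprime : 𝔭.IsPrime := Ideal.isPrime_of_prime hP
  have hPc : IsCoprime (Ideal.absNorm 𝔭 : ℤ) (2 * b * Δ) :=
    IsCoprime.of_isCoprime_of_dvd_left hcop
      (Int.natCast_dvd_natCast.mpr (map_dvd Ideal.absNorm hPa))
  have h2unit : ¬ IsUnit (2 * b * Δ) := by
    intro h
    have h2 : IsUnit (2 : ℤ) := isUnit_of_dvd_unit ⟨b * Δ, by ring⟩ h
    rcases Int.isUnit_iff.mp h2 with h | h <;> omega
  have hP0 : Ideal.absNorm 𝔭 ≠ 0 := by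
    intro h
    rw [h] at hPc
    exact h2unit (isCoprime_zero_left.mp (by exact_mod_cast hPc))
  obtain ⟨p, hp⟩ :=
    (IsPrincipalIdealRing.principal (Ideal.comap (algebraMap ℤ (𝓞 K)) 𝔭)).principal
  have hmemiff : ∀ n : ℤ, (n : 𝓞 K) ∈ 𝔭 ↔ p ∣ n := by
    intro n
    have h1 : n ∈ Ideal.comap (algebraMap ℤ (𝓞 K)) 𝔭 ↔ p ∣ n := by
      rw [hp]; exact Ideal.mem_span_singleton
    simpa [Ideal.mem_comap] using h1
  have hnormmem : ((Ideal.absNorm 𝔭 : ℤ) : 𝓞 K) ∈ 𝔭 := by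
    exact_mod_cast Ideal.absNorm_mem 𝔭
  have hpdvdnorm : p ∣ (Ideal.absNorm 𝔭 : ℤ) := (hmemiff _).mp hnormmem
  have hp0 : p ≠ 0 := by
    rintro rfl
    exact hP0 (by exact_mod_cast zero_dvd_iff.mp hpdvdnorm)
  have hppr : Prime p := by
    have h1 : (Ideal.comap (algebraMap ℤ (𝓞 K)) 𝔭).IsPrime :=
      hprime.comap (algebraMap ℤ (𝓞 K))
    rw [hp] at h1
    exact (Ideal.span_singleton_prime hp0).mp h1
  have hpcop : IsCoprime p (2 * b * Δ) := IsCoprime.of_isCoprime_of_dvd_left hPc hpdvdnorm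
  have hnd : ¬ p ∣ 2 * b * Δ := fun h => hppr.not_unit (hpcop.isUnit_of_dvd' dvd_rfl h)
  have hndb : ¬ p ∣ b := fun h => hnd ((h.mul_left 2).mul_right Δ)
  have hndΔ : ¬ p ∣ Δ := fun h => hnd (by rw [mul_assoc]; exact (h.mul_left b).mul_left 2)
  have hmem : (b : 𝓞 K) * (s : 𝓞 K) - θ * (t : 𝓞 K) ∈ 𝔭 :=
    Ideal.le_of_dvd (dvd_trans hPa hdvd) (Ideal.mem_span_singleton_self _)
  have hndt : ¬ p ∣ t := by
    intro h
    have ht𝔭 : ((t : ℤ) : 𝓞 K) ∈ 𝔭 := (hmemiff t).mpr h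
    have hbs : (b : 𝓞 K) * (s : 𝓞 K) ∈ 𝔭 := by
      have := Ideal.add_mem 𝔭 hmem (Ideal.mul_mem_left 𝔭 θ ht𝔭)
      simpa using this
    rcases hprime.mem_or_mem hbs with hb | hs
    · exact hndb ((hmemiff b).mp hb)
    · exact hppr.not_unit (hst.isUnit_of_dvd' ((hmemiff s).mp hs) h)
  set q : ℕ := p.natAbs with hq
  have hqiff : ∀ n : ℤ, (n : 𝓞 K) ∈ 𝔭 ↔ (q : ℤ) ∣ n := by
    intro n; rw [hmemiff n, hq, Int.natAbs_dvd]
  have hqpr : Prime ((q : ℕ) : ℤ) := by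
    rwa [hq, Int.prime_iff_natAbs_prime, Int.natAbs_natCast, ← Int.prime_iff_natAbs_prime]
  have hqndt : ¬ (q : ℤ) ∣ t := by rwa [hq, Int.natAbs_dvd]
  have hqndΔ : ¬ (q : ℤ) ∣ Δ := by rwa [hq, Int.natAbs_dvd]
  set c : ℤ := Int.gcdA t (q : ℤ) * (b * s) with hc
  have hgcd : Int.gcd t (q : ℤ) = 1 :=
    Int.isCoprime_iff_gcd_eq_one.mp ((hqpr.coprime_iff_not_dvd.mpr hqndt).symm)
  have hbez : (1 : ℤ) = t * Int.gcdA t (q : ℤ) + (q : ℤ) * Int.gcdB t (q : ℤ) := by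
    have h1 := Int.gcd_eq_gcd_ab t (q : ℤ)
    rw [hgcd] at h1
    exact_mod_cast h1
  have hqc : (q : ℤ) ∣ t * c - b * s :=
    ⟨-(Int.gcdB t (q : ℤ) * (b * s)), by rw [hc]; linear_combination (-(b*s)) * hbez⟩
  have hθc : θ - (c : 𝓞 K) ∈ 𝔭 := by
    have h2 : (t : 𝓞 K) * (θ - (c : 𝓞 K)) =
        -((b : 𝓞 K) * (s : 𝓞 K) - θ * (t : 𝓞 K)) - (((t * c - b * s : ℤ) : 𝓞 K)) := by
      push_cast; ring
    have hmem2 : (t : 𝓞 K) * (θ - (c : 𝓞 K)) ∈ 𝔭 := by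
      rw [h2]
      exact Ideal.sub_mem 𝔭 (neg_mem hmem) ((hqiff _).mpr hqc)
    rcases hprime.mem_or_mem hmem2 with h | h
    · exact absurd ((hqiff t).mp h) hqndt
    · exact h
  obtain ⟨u, v, huv⟩ := hqpr.coprime_iff_not_dvd.mpr hqndΔ
  have huvR : (u : 𝓞 K) * (q : 𝓞 K) + (v : 𝓞 K) * (Δ : 𝓞 K) = 1 := by
    exact_mod_cast congrArg (fun n : ℤ => (n : 𝓞 K)) huv
  have hsurj : Function.Surjective
      ((Ideal.Quotient.mk 𝔭).comp (Int.castRingHom (𝓞 K))) := by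
    intro z
    obtain ⟨x, rfl⟩ := Ideal.Quotient.mk_surjective z
    obtain ⟨g, hg⟩ := hD x
    refine ⟨v * Polynomial.eval c g, ?_⟩
    rw [RingHom.comp_apply, eq_intCast, Ideal.Quotient.mk_eq_mk_iff_sub_mem]
    have hD' : (Δ : 𝓞 K) * x - ((Polynomial.eval c g : ℤ) : 𝓞 K) ∈ 𝔭 := by
      rw [hg]; exact aux_aeval_sub_mem 𝔭 θ c hθc g
    have e1 : ((v * Polynomial.eval c g : ℤ) : 𝓞 K) - x =
        (-(v : 𝓞 K)) * ((Δ : 𝓞 K) * x - ((Polynomial.eval c g : ℤ) : 𝓞 K))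
          + (-(((u * (q : ℤ) : ℤ) : 𝓞 K))) * x := by
      push_cast
      linear_combination x * huvR
    rw [e1]
    refine Ideal.add_mem 𝔭 (Ideal.mul_mem_left 𝔭 _ hD') (Ideal.mul_mem_right x 𝔭 (neg_mem ?_))
    exact (hqiff _).mpr ⟨u, by ring⟩
  have hker : RingHom.ker ((Ideal.Quotient.mk 𝔭).comp (Int.castRingHom (𝓞 K))) =
      Ideal.span {((q : ℕ) : ℤ)} := by
    ext n
    rw [RingHom.mem_ker, RingHom.comp_apply, eq_intCast, Ideal.Quotient.eq_zero_iff_mem,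
      Ideal.mem_span_singleton]
    exact hqiff n
  have hnormq : Ideal.absNorm 𝔭 = q := by
    have e1 := RingHom.quotientKerEquivOfSurjective hsurj
    have e1 := (Ideal.quotEquivOfEq hker.symm).trans e1
    have e2 := (Int.quotientSpanEquivZMod ((q : ℕ) : ℤ)).symm.trans e1
    rw [Ideal.absNorm_apply, Submodule.cardQuot_apply, ← Nat.card_congr e2.toEquiv]
    simp [Nat.card_zmod]
  refine ⟨q, ?_, hnormq, hqiff, ?_, hqndΔ⟩
  · rw [Int.prime_iff_natAbs_prime] at hqpr
    simpa using hqpr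
  · exact hθc

/-- Lemma 2.3: if `gcd(s,t)=1`, `F(s,t) ≠ 0` and
`𝔞 ∣ (bs - θt)` with `gcd(N𝔞, 2bΔ_θ) = 1`, then every prime divisor of `𝔞` has
residue degree one, and no two distinct prime divisors of `𝔞` share the same norm. -/
theorem stmt_7 {K : Type*} [Field K] [NumberField K]
    (d : ℕ) (hd : 0 < d)
    (F Ft : MvPolynomial (Fin 2) ℤ)
    (hFhom : F.IsHomogeneous d) (hFirr : Irreducible F)
    (b : ℤ) (hb : b = MvPolynomial.eval (fun i : Fin 2 => if i = 0 then 1 else 0) F)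
    (hb0 : b ≠ 0)
    (hFt : ∀ x y : ℚ, (MvPolynomial.aeval ![x, y] Ft : ℚ) =
      (b : ℚ) ^ (d - 1) * MvPolynomial.aeval ![x / (b : ℚ), y] F)
    (θ : 𝓞 K) (hθ : (MvPolynomial.aeval ![θ, (1 : 𝓞 K)] Ft : 𝓞 K) = 0)
    (hdeg : Module.finrank ℚ K = d)
    (hgen : Algebra.adjoin ℚ {(θ : K)} = ⊤)
    (Δ : ℤ) (hΔ : Δ = Algebra.discr ℤ (fun i : Fin d => θ ^ (i : ℕ)))
    (s t : ℤ) (hst : IsCoprime s t)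
    (hF0 : MvPolynomial.eval (fun i : Fin 2 => if i = 0 then s else t) F ≠ 0)
    (𝔞 : Ideal (𝓞 K))
    (hdvd : 𝔞 ∣ Ideal.span {(b : 𝓞 K) * (s : 𝓞 K) - θ * (t : 𝓞 K)})
    (hcop : IsCoprime (Ideal.absNorm 𝔞 : ℤ) (2 * b * Δ)) :
    (∀ 𝔭 : Ideal (𝓞 K), Prime 𝔭 → 𝔭 ∣ 𝔞 → (Ideal.absNorm 𝔭).Prime) ∧
    (∀ 𝔭₁ 𝔭₂ : Ideal (𝓞 K), Prime 𝔭₁ → Prime 𝔭₂ → 𝔭₁ ∣ 𝔞 → 𝔭₂ ∣ 𝔞 →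
      Ideal.absNorm 𝔭₁ = Ideal.absNorm 𝔭₂ → 𝔭₁ = 𝔭₂) := by
  have hD : ∀ x : 𝓞 K, ∃ g : Polynomial ℤ, (Δ : 𝓞 K) * x = Polynomial.aeval θ g :=
    aux_discr_mul_mem θ d hdeg hgen Δ hΔ
  constructor
  · intro 𝔭 hP hPa
    obtain ⟨q, hqpr, hnorm, -, -, -⟩ := key_lemma θ b Δ s t hst hD 𝔞 hdvd hcop 𝔭 hP hPa
    rw [hnorm]; exact hqpr
  · intro 𝔭₁ 𝔭₂ hP1 hP2 hPa1 hPa2 hnorm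
    obtain ⟨q₁, hq1pr, hn1, hiff1, hc1, hΔ1⟩ :=
      key_lemma θ b Δ s t hst hD 𝔞 hdvd hcop 𝔭₁ hP1 hPa1
    obtain ⟨q₂, hq2pr, hn2, hiff2, hc2, hΔ2⟩ :=
      key_lemma θ b Δ s t hst hD 𝔞 hdvd hcop 𝔭₂ hP2 hPa2
    have hqq : q₁ = q₂ := by rw [← hn1, ← hn2, hnorm]
    subst hqq
    -- both are maximal; show 𝔭₁ ≤ 𝔭₂
    have hbot1 : 𝔭₁ ≠ ⊥ := by
      intro h
      rw [h, Ideal.absNorm_eq_zero_iff.mpr rfl] at hn1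
      exact hq1pr.ne_zero hn1.symm
    have hmax1 : 𝔭₁.IsMaximal :=
      Ideal.IsPrime.isMaximal (Ideal.isPrime_of_prime hP1) hbot1
    have hle : 𝔭₁ ≤ 𝔭₂ := by
      intro x hx
      obtain ⟨g, hg⟩ := hD x
      set c : ℤ := Int.gcdA t (q₁ : ℤ) * (b * s) with hcdef
      set m : ℤ := Polynomial.eval c g with hm
      have hA1 : (Δ : 𝓞 K) * x - (m : 𝓞 K) ∈ 𝔭₁ := by
        rw [hg]; exact aux_aeval_sub_mem 𝔭₁ θ c hc1 g
      have hA2 : (Δ : 𝓞 K) * x - (m : 𝓞 K) ∈ 𝔭₂ := by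
        rw [hg]; exact aux_aeval_sub_mem 𝔭₂ θ c hc2 g
      have hm1 : (m : 𝓞 K) ∈ 𝔭₁ := by
        have h1 : (Δ : 𝓞 K) * x ∈ 𝔭₁ := Ideal.mul_mem_left 𝔭₁ _ hx
        have := Ideal.sub_mem 𝔭₁ h1 hA1
        simpa using this
      have hqm : (q₁ : ℤ) ∣ m := (hiff1 m).mp hm1
      have hm2 : (m : 𝓞 K) ∈ 𝔭₂ := (hiff2 m).mpr hqm
      have hΔx2 : (Δ : 𝓞 K) * x ∈ 𝔭₂ := by
        have := Ideal.add_mem 𝔭₂ hA2 hm2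
        simpa using this
      rcases (Ideal.isPrime_of_prime hP2).mem_or_mem hΔx2 with hΔm | hxm
      · exact absurd ((hiff2 Δ).mp hΔm) hΔ2
      · exact hxm
    exact (hmax1.eq_of_le (Ideal.isPrime_of_prime hP2).ne_top hle).symm ▸ rfl
end

section
/- Let $K$ be a number field with ring of integers $\mathfrak{o}_K$ and discriminant $D_K$, and let $\theta\in\mathfrak{o}_K$ with $K=\mathbb{Q}(\theta)$, $b\in\mathbb{Z}$. Let $\mathfrak{a}\in\mathcal{P}_K$ with $\gcd(\mathrm{N}_K\mathfrak{a},D_K)=1$. Then there exists $k\in\mathbb{Z}$ such that for all $(s,t)\in\mathbb{Z}^2$: $\mathfrak{a}\mid(bs-\theta t)$ if and only if $bs\equiv kt\ (\mathrm{mod}\ \mathrm{N}_K\mathfrak{a})$. -/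
open NumberField

set_option maxHeartbeats 1000000


lemma aux_unramified {K : Type*} [Field K] [NumberField K]
    (𝔭 : Ideal (𝓞 K)) (hp : Prime 𝔭) {p : ℕ} (pp : p.Prime)
    (hdisc : ¬ ((p : ℤ) ∣ NumberField.discr K)) :
    ¬ 𝔭 ^ 2 ∣ Ideal.span {(p : 𝓞 K)} := by
  classical
  haveI : Fact p.Prime := ⟨pp⟩
  rintro ⟨𝔠, hc⟩
  apply hdisc
  have hpK : ((p : ℕ) : 𝓞 K) ≠ 0 := by
    exact_mod_cast Nat.cast_ne_zero.mpr pp.ne_zero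
  have hspan_ne : Ideal.span {((p : ℕ) : 𝓞 K)} ≠ 0 := by
    simpa [Ideal.span_singleton_eq_bot] using hpK
  have h𝔠 : 𝔠 ≠ 0 := by
    rintro rfl
    rw [mul_zero] at hc
    exact hspan_ne hc
  have hlt : 𝔭 ^ 2 * 𝔠 < 𝔭 * 𝔠 := by
    refine lt_of_le_of_ne (Ideal.mul_mono_left (Ideal.pow_le_self two_ne_zero)) ?_
    intro heq
    have h1 : 𝔭 * 𝔭 = 𝔭 * 1 := by
      have := mul_right_cancel₀ h𝔠 heq
      rw [mul_one, ← pow_two, this]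
    have := mul_left_cancel₀ hp.ne_zero h1
    exact hp.not_isUnit (this ▸ isUnit_one)
  obtain ⟨x, hx1, hx2⟩ := SetLike.exists_of_lt hlt
  have hxns : x ∉ Ideal.span {((p : ℕ) : 𝓞 K)} := by rwa [hc]
  have hxsq : x ^ 2 ∈ Ideal.span {((p : ℕ) : 𝓞 K)} := by
    rw [hc]
    have h2 : x * x ∈ (𝔭 * 𝔠) * (𝔭 * 𝔠) := Ideal.mul_mem_mul hx1 hx1
    have h3 : (𝔭 * 𝔠) * (𝔭 * 𝔠) = (𝔭 ^ 2 * 𝔠) * 𝔠 := by ring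
    rw [pow_two x]
    rw [h3] at h2
    exact Ideal.mul_le_left h2
  obtain ⟨z, hz⟩ := Ideal.mem_span_singleton.mp hxsq
  -- basis
  set b := NumberField.RingOfIntegers.basis K with hbdef
  -- trace of x * y is ≡ 0 mod p for all y
  have key : ∀ y : 𝓞 K, ((Algebra.trace ℤ (𝓞 K) (x * y) : ℤ) : ZMod p) = 0 := by
    intro y
    set A := Algebra.leftMulMatrix b (x * y) with hA
    have hA2 : A ^ 2 = Algebra.leftMulMatrix b (((p : ℕ) : 𝓞 K)) * Algebra.leftMulMatrix b (z * y ^ 2) := by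
      rw [hA, ← map_pow, ← map_mul]
      congr 1
      rw [mul_pow, hz]; ring
    have hB2 : ((Int.castRingHom (ZMod p)).mapMatrix A) ^ 2 = 0 := by
      rw [← map_pow, hA2, map_mul, map_natCast (Algebra.leftMulMatrix b),
        map_natCast ((Int.castRingHom (ZMod p)).mapMatrix)]
      simp [ZMod.natCast_self]
    have hnil : IsNilpotent (((Int.castRingHom (ZMod p)).mapMatrix A).trace) :=
      Matrix.isNilpotent_trace_of_isNilpotent ⟨2, hB2⟩
    have htr0 : (((Int.castRingHom (ZMod p)).mapMatrix A)).trace = 0 := hnil.eq_zero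
    have htr : (((Int.castRingHom (ZMod p)).mapMatrix A)).trace = ((A.trace : ℤ) : ZMod p) := by
      simp [Matrix.trace, RingHom.mapMatrix_apply, Matrix.diag, Matrix.map_apply]
    rw [Algebra.trace_eq_matrix_trace b (x * y), ← hA, ← htr, htr0]
  -- coordinate vector of x mod p
  set c : _ → ℤ := fun j => b.repr x j with hcdef
  set v : _ → ZMod p := fun j => ((c j : ℤ) : ZMod p) with hvdef
  have hv : v ≠ 0 := by
    intro h0
    apply hxns
    have hdvd : ∀ j, (p : ℤ) ∣ c j := by
      intro j
      have hvj : v j = 0 := by rw [h0]; rfl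
      rw [hvdef] at hvj
      exact (ZMod.intCast_zmod_eq_zero_iff_dvd _ p).mp hvj
    have hx : x = ((p : ℕ) : 𝓞 K) * ∑ j, ((c j / p : ℤ)) • b j := by
      rw [Finset.mul_sum]
      conv_lhs => rw [← Module.Basis.sum_repr b x]
      refine Finset.sum_congr rfl fun j _ => ?_
      have h1 : (c j) • b j = ((p : ℤ) * (c j / p)) • b j := by
        rw [Int.mul_ediv_cancel' (hdvd j)]
      rw [h1, mul_smul, zsmul_eq_mul]
      norm_cast
    exact Ideal.mem_span_singleton.mpr ⟨_, hx⟩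
  have hMv : Matrix.mulVec ((Algebra.traceMatrix ℤ (b : _ → 𝓞 K)).map (Int.cast : ℤ → ZMod p)) v = 0 := by
    funext i
    have hsum : ∑ j, Algebra.traceMatrix ℤ (b : _ → 𝓞 K) i j * c j
        = Algebra.trace ℤ (𝓞 K) (x * b i) := by
      rw [mul_comm x (b i)]
      conv_rhs => rw [← Module.Basis.sum_repr b x]
      rw [Finset.mul_sum, map_sum]
      refine Finset.sum_congr rfl fun j _ => ?_
      rw [mul_smul_comm, LinearMap.map_smul, smul_eq_mul]
      simp [hcdef, Algebra.traceMatrix_apply, Algebra.traceForm_apply, mul_comm]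
    have : (Matrix.mulVec ((Algebra.traceMatrix ℤ (b : _ → 𝓞 K)).map (Int.cast : ℤ → ZMod p)) v) i
        = ((∑ j, Algebra.traceMatrix ℤ (b : _ → 𝓞 K) i j * c j : ℤ) : ZMod p) := by
      simp [Matrix.mulVec, dotProduct, Matrix.map_apply, hvdef]
    rw [Pi.zero_apply, this, hsum, key (b i)]
  have hdet : ((Algebra.traceMatrix ℤ (b : _ → 𝓞 K)).map (Int.cast : ℤ → ZMod p)).det = 0 :=
    Matrix.exists_mulVec_eq_zero_iff.mp ⟨v, hv, hMv⟩
  have hcast : ((NumberField.discr K : ℤ) : ZMod p) = 0 := by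
    have hd : NumberField.discr K = (Algebra.traceMatrix ℤ (b : _ → 𝓞 K)).det := by
      rw [hbdef]
      exact Algebra.discr_def ℤ _
    rw [hd]
    have h2 := RingHom.map_det (Int.castRingHom (ZMod p)) (Algebra.traceMatrix ℤ (b : _ → 𝓞 K))
    rw [RingHom.mapMatrix_apply, Int.coe_castRingHom] at h2
    rw [show (((Algebra.traceMatrix ℤ (b : _ → 𝓞 K)).det : ℤ) : ZMod p)
      = (Int.castRingHom (ZMod p)) (Algebra.traceMatrix ℤ (b : _ → 𝓞 K)).det from rfl,
      Int.coe_castRingHom] at *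
    rw [h2]
    exact hdet
  exact (ZMod.intCast_zmod_eq_zero_iff_dvd _ p).mp hcast

lemma aux_pow_dvd {K : Type*} [Field K] [NumberField K]
    (𝔭 : Ideal (𝓞 K)) (hp : Prime 𝔭) {p : ℕ} (pp : p.Prime)
    (hmem : ((p : ℕ) : 𝓞 K) ∈ 𝔭)
    (hur : ¬ 𝔭 ^ 2 ∣ Ideal.span {((p : ℕ) : 𝓞 K)}) :
    ∀ e : ℕ, ∀ m : ℤ, 𝔭 ^ e ∣ Ideal.span {(m : 𝓞 K)} → (p : ℤ) ^ e ∣ m := by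
  intro e
  induction e with
  | zero => intro m _; simpa using one_dvd m
  | succ e ih =>
    intro m hm
    have hm𝔭 : (m : 𝓞 K) ∈ 𝔭 := by
      have h1 : 𝔭 ∣ Ideal.span {(m : 𝓞 K)} :=
        dvd_trans (dvd_pow_self 𝔭 (Nat.succ_ne_zero e)) hm
      exact Ideal.dvd_span_singleton.mp h1
    have hpm : (p : ℤ) ∣ m := by
      by_contra hnd
      have hcop : IsCoprime ((p : ℕ) : ℤ) m := by
        rw [Int.isCoprime_iff_gcd_eq_one]
        have : ¬ p ∣ m.natAbs := by
          intro h
          exact hnd (Int.natCast_dvd_natCast.mpr h |>.trans (Int.natAbs_dvd.mpr dvd_rfl))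
        have := (Nat.Prime.coprime_iff_not_dvd pp).mpr this
        simpa [Int.gcd] using this
      obtain ⟨u, v, huv⟩ := hcop
      have h1 : (1 : 𝓞 K) ∈ 𝔭 := by
        have : ((u * p + v * m : ℤ) : 𝓞 K) ∈ 𝔭 := by
          push_cast
          exact Ideal.add_mem _ (Ideal.mul_mem_left _ _ hmem) (Ideal.mul_mem_left _ _ hm𝔭)
        rw [huv] at this
        exact_mod_cast this
      exact hp.not_unit (Ideal.isUnit_iff.mpr ((Ideal.eq_top_iff_one 𝔭).mpr h1))
    obtain ⟨m', rfl⟩ := hpm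
    have hsp : Ideal.span {((((p:ℕ):ℤ) * m' : ℤ) : 𝓞 K)}
        = Ideal.span {((p:ℕ) : 𝓞 K)} * Ideal.span {(m' : 𝓞 K)} := by
      rw [Ideal.span_singleton_mul_span_singleton]
      push_cast
      rfl
    obtain ⟨𝔟, hb⟩ := Ideal.dvd_span_singleton.mpr hmem
    have h𝔭𝔟 : ¬ 𝔭 ∣ 𝔟 := by
      rintro ⟨𝔠, hc⟩
      exact hur ⟨𝔠, by rw [hb, hc]; ring⟩
    have h2 : 𝔭 ^ e ∣ 𝔟 * Ideal.span {(m' : 𝓞 K)} := by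
      have h3 : 𝔭 * 𝔭 ^ e ∣ 𝔭 * (𝔟 * Ideal.span {(m' : 𝓞 K)}) := by
        rw [← pow_succ']
        rw [hsp, hb] at hm
        convert hm using 1
        ring
      exact (mul_dvd_mul_iff_left hp.ne_zero).mp h3
    have h4 : 𝔭 ^ e ∣ Ideal.span {(m' : 𝓞 K)} :=
      Prime.pow_dvd_of_dvd_mul_left hp e h𝔭𝔟 h2
    have h5 := ih m' h4
    calc (p : ℤ) ^ (e + 1) = (p : ℤ) * (p : ℤ) ^ e := by ring
    _ ∣ (p : ℤ) * m' := mul_dvd_mul_left _ h5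

lemma aux_ker {K : Type*} [Field K] [NumberField K]
    (𝔞 : Ideal (𝓞 K)) (h𝔞 : 𝔞 ≠ 0)
    (hP1 : ∀ 𝔭 : Ideal (𝓞 K), Prime 𝔭 → 𝔭 ∣ 𝔞 → (Ideal.absNorm 𝔭).Prime)
    (hP2 : ∀ 𝔭₁ 𝔭₂ : Ideal (𝓞 K), Prime 𝔭₁ → Prime 𝔭₂ → 𝔭₁ ∣ 𝔞 → 𝔭₂ ∣ 𝔞 →
      Ideal.absNorm 𝔭₁ = Ideal.absNorm 𝔭₂ → 𝔭₁ = 𝔭₂)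
    (hcop : IsCoprime (Ideal.absNorm 𝔞 : ℤ) (NumberField.discr K)) :
    ∀ m : ℤ, (m : 𝓞 K) ∈ 𝔞 → (Ideal.absNorm 𝔞 : ℤ) ∣ m := by
  classical
  intro m hm
  set s := UniqueFactorizationMonoid.normalizedFactors 𝔞 with hsdef
  have hprod : s.prod = 𝔞 :=
    associated_iff_eq.mp (UniqueFactorizationMonoid.prod_normalizedFactors h𝔞)
  have h𝔞eq : 𝔞 = ∏ 𝔭 ∈ s.toFinset, 𝔭 ^ s.count 𝔭 := by
    rw [← hprod, Finset.prod_multiset_count]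
  have hNorm : (Ideal.absNorm 𝔞 : ℤ) = ∏ 𝔭 ∈ s.toFinset, (Ideal.absNorm 𝔭 : ℤ) ^ s.count 𝔭 := by
    rw [h𝔞eq, map_prod]
    push_cast
    refine Finset.prod_congr rfl fun 𝔭 _ => ?_
    rw [map_pow]
    push_cast
    rfl
  -- basic facts about each factor
  have hfact : ∀ 𝔭 ∈ s.toFinset, Prime 𝔭 ∧ 𝔭 ∣ 𝔞 ∧ (Ideal.absNorm 𝔭).Prime := by
    intro 𝔭 h𝔭
    rw [Multiset.mem_toFinset] at h𝔭
    have hpr := UniqueFactorizationMonoid.prime_of_normalized_factor 𝔭 h𝔭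
    have hdvd := UniqueFactorizationMonoid.dvd_of_mem_normalizedFactors h𝔭
    exact ⟨hpr, hdvd, hP1 𝔭 hpr hdvd⟩
  rw [hNorm]
  apply Finset.prod_dvd_of_coprime
  · intro 𝔭₁ h1 𝔭₂ h2 hne
    obtain ⟨hpr1, hdvd1, hn1⟩ := hfact 𝔭₁ h1
    obtain ⟨hpr2, hdvd2, hn2⟩ := hfact 𝔭₂ h2
    have hnn : Ideal.absNorm 𝔭₁ ≠ Ideal.absNorm 𝔭₂ := fun h =>
      hne (hP2 𝔭₁ 𝔭₂ hpr1 hpr2 hdvd1 hdvd2 h)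
    have : Nat.Coprime (Ideal.absNorm 𝔭₁) (Ideal.absNorm 𝔭₂) :=
      (Nat.coprime_primes hn1 hn2).mpr hnn
    exact (Nat.isCoprime_iff_coprime.mpr this).pow
  · intro 𝔭 h𝔭
    obtain ⟨hpr, hdvd, hn⟩ := hfact 𝔭 h𝔭
    have hdd : ¬ ((Ideal.absNorm 𝔭 : ℤ) ∣ NumberField.discr K) := by
      intro hd
      have hd2 : (Ideal.absNorm 𝔭 : ℤ) ∣ (Ideal.absNorm 𝔞 : ℤ) := by
        exact_mod_cast Int.natCast_dvd_natCast.mpr (map_dvd Ideal.absNorm hdvd)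
      have := hcop.isUnit_of_dvd' hd2 hd
      rw [Int.isUnit_iff] at this
      have hnn : (0:ℤ) ≤ (Ideal.absNorm 𝔭 : ℤ) := Int.natCast_nonneg _
      have h1 : Ideal.absNorm 𝔭 ≠ 1 := hn.one_lt.ne'
      rcases this with h | h
      · exact h1 (by exact_mod_cast h)
      · omega
    have hmem : ((Ideal.absNorm 𝔭 : ℕ) : 𝓞 K) ∈ 𝔭 := Ideal.absNorm_mem 𝔭
    have hur := aux_unramified 𝔭 hpr hn hdd
    apply aux_pow_dvd 𝔭 hpr hn hmem hur
    refine dvd_trans ?_ (Ideal.dvd_span_singleton.mpr hm)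
    rw [h𝔞eq]
    exact Finset.dvd_prod_of_mem _ h𝔭

/-- Lemma 2.4: for `𝔞 ∈ 𝒫_K` with `gcd(N𝔞, D_K) = 1` there is
`k ∈ ℤ` such that `𝔞 ∣ (bs - θt)` iff `bs ≡ kt (mod N𝔞)` for all `(s,t) ∈ ℤ²`. -/
theorem stmt_8 {K : Type*} [Field K] [NumberField K]
    (θ : 𝓞 K) (hgen : Algebra.adjoin ℚ {(θ : K)} = ⊤) (b : ℤ)
    (𝔞 : Ideal (𝓞 K)) (h𝔞 : 𝔞 ≠ 0)
    (hP1 : ∀ 𝔭 : Ideal (𝓞 K), Prime 𝔭 → 𝔭 ∣ 𝔞 → (Ideal.absNorm 𝔭).Prime)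
    (hP2 : ∀ 𝔭₁ 𝔭₂ : Ideal (𝓞 K), Prime 𝔭₁ → Prime 𝔭₂ → 𝔭₁ ∣ 𝔞 → 𝔭₂ ∣ 𝔞 →
      Ideal.absNorm 𝔭₁ = Ideal.absNorm 𝔭₂ → 𝔭₁ = 𝔭₂)
    (hcop : IsCoprime (Ideal.absNorm 𝔞 : ℤ) (NumberField.discr K)) :
    ∃ k : ℤ, ∀ s t : ℤ,
      𝔞 ∣ Ideal.span {(b : 𝓞 K) * (s : 𝓞 K) - θ * (t : 𝓞 K)} ↔
        (Ideal.absNorm 𝔞 : ℤ) ∣ b * s - k * t := by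
  classical
  have hn0 : Ideal.absNorm 𝔞 ≠ 0 := by
    rw [Ne, Ideal.absNorm_eq_zero_iff]; exact h𝔞
  haveI : NeZero (Ideal.absNorm 𝔞) := ⟨hn0⟩
  have hker := aux_ker 𝔞 h𝔞 hP1 hP2 hcop
  have hker' : ∀ m : ℤ, (m : 𝓞 K) ∈ 𝔞 ↔ (Ideal.absNorm 𝔞 : ℤ) ∣ m := by
    intro m
    refine ⟨hker m, ?_⟩
    rintro ⟨d, rfl⟩
    push_cast
    exact Ideal.mul_mem_right _ _ (by exact_mod_cast Ideal.absNorm_mem 𝔞)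
  haveI : Fintype (𝓞 K ⧸ 𝔞) := @Fintype.ofFinite _ (Ideal.finiteQuotientOfFreeOfNeBot 𝔞 h𝔞)
  set f : ZMod (Ideal.absNorm 𝔞) → (𝓞 K ⧸ 𝔞) :=
    fun a => Ideal.Quotient.mk 𝔞 ((a.val : ℤ) : 𝓞 K) with hfdef
  have hinj : Function.Injective f := by
    intro a a' h
    have h1 : (((a.val : ℤ) - (a'.val : ℤ) : ℤ) : 𝓞 K) ∈ 𝔞 := by
      rw [hfdef] at h
      simp only at h
      have h1' := (Ideal.Quotient.eq).mp h
      push_cast at h1' ⊢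
      exact h1'
    have h2 := (hker' _).mp h1
    have h3 := (ZMod.intCast_zmod_eq_zero_iff_dvd _ _).mpr h2
    push_cast at h3
    have h4 : (a.val : ZMod (Ideal.absNorm 𝔞)) = (a'.val : ZMod (Ideal.absNorm 𝔞)) :=
      sub_eq_zero.mp h3
    rwa [ZMod.natCast_val, ZMod.cast_id, ZMod.natCast_val, ZMod.cast_id] at h4
  have hcard : Fintype.card (ZMod (Ideal.absNorm 𝔞)) = Fintype.card (𝓞 K ⧸ 𝔞) := by
    rw [ZMod.card, Ideal.absNorm_apply, Submodule.cardQuot_apply, Nat.card_eq_fintype_card]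
  have hsurj := ((Fintype.bijective_iff_injective_and_card f).mpr ⟨hinj, hcard⟩).surjective
  obtain ⟨a, ha⟩ := hsurj (Ideal.Quotient.mk 𝔞 θ)
  have hθ : ((a.val : ℤ) : 𝓞 K) - θ ∈ 𝔞 := (Ideal.Quotient.eq).mp ha
  refine ⟨(a.val : ℤ), fun s t => ?_⟩
  rw [Ideal.dvd_span_singleton]
  have hdiff : ((b : 𝓞 K) * (s : 𝓞 K) - θ * (t : 𝓞 K))
      - ((b * s - (a.val : ℤ) * t : ℤ) : 𝓞 K) ∈ 𝔞 := by
    have he : ((b : 𝓞 K) * (s : 𝓞 K) - θ * (t : 𝓞 K))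
        - ((b * s - (a.val : ℤ) * t : ℤ) : 𝓞 K)
        = (((a.val : ℤ) : 𝓞 K) - θ) * (t : 𝓞 K) := by push_cast; ring
    rw [he]
    exact Ideal.mul_mem_right _ _ hθ
  constructor
  · intro h
    have h2 := Ideal.sub_mem 𝔞 h hdiff
    simp only [sub_sub_cancel] at h2
    exact (hker' _).mp h2
  · intro h
    have h2 : ((b * s - (a.val : ℤ) * t : ℤ) : 𝓞 K) ∈ 𝔞 := (hker' _).mpr h
    have h3 := Ideal.add_mem 𝔞 h2 hdiff
    rwa [add_sub_cancel] at h3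
end
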